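/- In the normal game with target SOS = [S,O,S] on the 2×n board (where the target only counts horizontally within a row): if n < 7 the game is a draw (neither player can force a win), and if n ≥ 7 the second player can force a win. -/

import Mathlib

/-- The two letters of the SOS game. -/
inductive Letter : Type
  | S : Letter
  | O : Letter
  deriving DecidableEq

open Letter

/-- The target string `t` occurs left-to-right as a consecutive block within a
single row of the 2×n board `b`. -/
def Achieves2 {n : ℕ} (t : List Letter) (b : Fin 2 × Fin n → Option Letter) : Prop :=
  ∃ r : Fin 2, ∃ i : ℕ, ∀ j : ℕ, (hj : j < t.length) → ∃ h : i + j < n,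
    b (r, ⟨i + j, h⟩) = some (t.get ⟨j, hj⟩)

/-- `Force Win m w b`: the player to move in position `b` (with `m` remaining
moves, i.e. `m` empty cells) can force a win when `w = true`, resp. can force
at least a draw when `w = false`, in the normal game whose winning boards are
given by `Win`. -/
def Force {α : Type} [DecidableEq α] (Win : (α → Option Letter) → Prop) :
    ℕ → Bool → (α → Option Letter) → Prop
  | 0, w, _ => w = false
  | m + 1, w, b => ∃ i : α, ∃ x : Letter, b i = none ∧
      (Win (Function.update b i (some x)) ∨
        ¬ Force Win m (!w) (Function.update b i (some x)))

namespace SOSAux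

variable {n : ℕ}

abbrev Bd (n : ℕ) := Fin 2 × Fin n → Option Letter

def get (b : Bd n) (r : Fin 2) (j : ℕ) : Option Letter :=
  if h : j < n then b (r, ⟨j, h⟩) else none

def upd (b : Bd n) (r : Fin 2) (j : ℕ) (h : j < n) (x : Letter) : Bd n :=
  Function.update b (r, ⟨j, h⟩) (some x)

def emp (b : Bd n) (r : Fin 2) (j : ℕ) : Prop := j < n ∧ get b r j = none

def WinB (b : Bd n) : Prop :=
  ∃ r j, get b r j = some S ∧ get b r (j+1) = some O ∧ get b r (j+2) = some S

def Threat (b : Bd n) : Prop :=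
  ∃ r j, ∃ h : j < n, ∃ x, get b r j = none ∧ WinB (upd b r j h x)

def Trap (b : Bd n) : Prop :=
  ∃ r j, get b r j = some S ∧ emp b r (j+1) ∧ emp b r (j+2) ∧ get b r (j+3) = some S

def PreTrap (b : Bd n) : Prop :=
  ∃ r j, (get b r j = some S ∧ emp b r (j+1) ∧ emp b r (j+2) ∧ emp b r (j+3)) ∨
         (emp b r j ∧ emp b r (j+1) ∧ emp b r (j+2) ∧ get b r (j+3) = some S)

def cntE (b : Bd n) : ℕ := (Finset.univ.filter (fun i => b i = none)).card

lemma lt_of_get_some {b : Bd n} {r j v} (h : get b r j = some v) : j < n := by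
  by_contra hn; simp [get, hn] at h

lemma get_eq {b : Bd n} {r : Fin 2} {j : ℕ} (h : j < n) : get b r j = b (r, ⟨j, h⟩) := by
  simp [get, h]

lemma get_upd_self {b : Bd n} {r j x} (h : j < n) : get (upd b r j h x) r j = some x := by
  simp [get, upd, h]

lemma get_upd_ne {b : Bd n} {r' r : Fin 2} {j' j : ℕ} {x} (h : j < n)
    (hne : r' ≠ r ∨ j' ≠ j) : get (upd b r j h x) r' j' = get b r' j' := by
  unfold get upd
  split
  · rename_i h'
    rw [Function.update_of_ne]
    intro he
    injection he with h1 h2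
    rcases hne with h3 | h3
    · exact h3 h1
    · exact h3 (by simpa using congrArg Fin.val h2)
  · rfl

lemma winB_iff (b : Bd n) : Achieves2 [S, O, S] b ↔ WinB b := by
  constructor
  · rintro ⟨r, i, hw⟩
    refine ⟨r, i, ?_, ?_, ?_⟩
    · obtain ⟨h, he⟩ := hw 0 (by norm_num)
      rw [get_eq (by omega)]; simpa using he
    · obtain ⟨h, he⟩ := hw 1 (by norm_num)
      rw [get_eq (by omega : i + 1 < n)]; simpa using he
    · obtain ⟨h, he⟩ := hw 2 (by norm_num)
      rw [get_eq (by omega : i + 2 < n)]; simpa using he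
  · rintro ⟨r, i, h0, h1, h2⟩
    refine ⟨r, i, ?_⟩
    intro j hj
    simp only [List.length] at hj
    interval_cases j
    · refine ⟨by simpa using lt_of_get_some h0, ?_⟩
      show b (r, ⟨i + 0, _⟩) = some S
      rw [← get_eq (b := b) (r := r) (j := i + 0)]; simpa using h0
    · refine ⟨by simpa using lt_of_get_some h1, ?_⟩
      show b (r, ⟨i + 1, _⟩) = some O
      rw [← get_eq (b := b) (r := r) (j := i + 1)]; exact h1
    · refine ⟨by simpa using lt_of_get_some h2, ?_⟩
      show b (r, ⟨i + 2, _⟩) = some S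
      rw [← get_eq (b := b) (r := r) (j := i + 2)]; exact h2

lemma force_congr {α : Type} [DecidableEq α] {W1 W2 : (α → Option Letter) → Prop}
    (h : ∀ b, W1 b ↔ W2 b) : ∀ m w b, Force W1 m w b ↔ Force W2 m w b := by
  intro m
  induction m with
  | zero => intro w b; rfl
  | succ m ih =>
    intro w b
    constructor
    · rintro ⟨i, x, hi, hc⟩
      refine ⟨i, x, hi, ?_⟩
      rcases hc with hc | hc
      · exact Or.inl ((h _).1 hc)
      · exact Or.inr (fun hf => hc ((ih _ _).2 hf))
    · rintro ⟨i, x, hi, hc⟩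
      refine ⟨i, x, hi, ?_⟩
      rcases hc with hc | hc
      · exact Or.inl ((h _).2 hc)
      · exact Or.inr (fun hf => hc ((ih _ _).1 hf))

lemma cnt_upd {b : Bd n} {r j x} (h : j < n) (he : get b r j = none) :
    cntE (upd b r j h x) + 1 = cntE b := by
  rw [get_eq h] at he
  have hmem : (r, (⟨j, h⟩ : Fin n)) ∈ Finset.univ.filter (fun i => b i = none) := by
    simp [he]
  have hset : Finset.univ.filter (fun i => upd b r j h x i = none) =
      (Finset.univ.filter (fun i => b i = none)).erase (r, ⟨j, h⟩) := by
    ext i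
    by_cases hi : i = (r, ⟨j, h⟩)
    · subst hi; simp only [Finset.mem_filter]; simp [upd]
    · simp only [Finset.mem_filter]; simp [upd, Function.update_of_ne hi, hi]
  unfold cntE
  rw [hset, Finset.card_erase_of_mem hmem]
  have : 0 < (Finset.univ.filter (fun i => b i = none)).card :=
    Finset.card_pos.2 ⟨_, hmem⟩
  omega

lemma cnt_pos {b : Bd n} {r j} (he : emp b r j) : 0 < cntE b := by
  obtain ⟨h, he⟩ := he
  rw [get_eq h] at he
  exact Finset.card_pos.2 ⟨(r, ⟨j, h⟩), by simp [cntE, he]⟩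


/-- If the board had no threat and was not won, then after one move at `(ρ,j)`
any threat must be localized to a window through `(ρ,j)`. -/
lemma threat_localize {b : Bd n} {ρ : Fin 2} {j : ℕ} {x : Letter} (hj : j < n)
    (hc : get b ρ j = none) (hT : ¬ Threat b) (hT' : Threat (upd b ρ j hj x)) :
    ∃ a,
    (j = a ∧ x = S ∧ ((emp b ρ (a+1) ∧ get b ρ (a+2) = some S) ∨
        (get b ρ (a+1) = some O ∧ emp b ρ (a+2)))) ∨
    (j = a+1 ∧ x = O ∧ ((emp b ρ a ∧ get b ρ (a+2) = some S) ∨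
        (get b ρ a = some S ∧ emp b ρ (a+2)))) ∨
    (j = a+2 ∧ x = S ∧ ((emp b ρ a ∧ get b ρ (a+1) = some O) ∨
        (get b ρ a = some S ∧ emp b ρ (a+1)))) := by
  obtain ⟨ρ', j', hj', y, hd, hwin⟩ := hT'
  have hdc : ρ' ≠ ρ ∨ j' ≠ j := by
    by_contra hcon
    push_neg at hcon
    obtain ⟨e1, e2⟩ := hcon
    subst e1; subst e2
    rw [get_upd_self] at hd; cases hd
  have hbd : get b ρ' j' = none := by
    rw [← get_upd_ne (b := b) (x := x) hj hdc]; exact hd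
  obtain ⟨r, a, h0, h1, h2⟩ := hwin
  set b1 := upd b ρ j hj x with hb1
  set b2 := upd b1 ρ' j' hj' y with hb2
  have flip : ∀ {r1 r2 : Fin 2} {p1 p2 : ℕ}, ¬(r1 = r2 ∧ p1 = p2) → (r2 ≠ r1 ∨ p2 ≠ p1) := by
    intro r1 r2 p1 p2 h
    rcases not_and_or.mp h with h | h
    · exact Or.inl (fun e => h e.symm)
    · exact Or.inr (fun e => h e.symm)
  -- pass-through lemmas
  have pass1 : ∀ p, ¬(ρ = r ∧ j = p) → ¬(ρ' = r ∧ j' = p) → get b2 r p = get b r p := by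
    intro p hp1 hp2
    rw [hb2, get_upd_ne hj' (flip hp2), hb1, get_upd_ne hj (flip hp1)]
  have passd : ∀ p, ¬(ρ = r ∧ j = p) → get b2 r p = get (upd b ρ' j' hj' y) r p := by
    intro p hp1
    by_cases hp2 : ρ' = r ∧ j' = p
    · obtain ⟨e1, e2⟩ := hp2; subst e1; subst e2
      rw [hb2, get_upd_self, get_upd_self]
    · rw [hb2, get_upd_ne hj' (flip hp2), hb1, get_upd_ne hj (flip hp1),
        get_upd_ne hj' (flip hp2)]
  have passc : ∀ p, ¬(ρ' = r ∧ j' = p) → get b2 r p = get b1 r p := by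
    intro p hp2
    rw [hb2, get_upd_ne hj' (flip hp2)]
  -- c is in the window
  have hcwin : ρ = r ∧ (j = a ∨ j = a+1 ∨ j = a+2) := by
    by_contra hcon
    have k0 : ¬(ρ = r ∧ j = a) := fun hh => hcon ⟨hh.1, Or.inl hh.2⟩
    have k1 : ¬(ρ = r ∧ j = a+1) := fun hh => hcon ⟨hh.1, Or.inr (Or.inl hh.2)⟩
    have k2 : ¬(ρ = r ∧ j = a+2) := fun hh => hcon ⟨hh.1, Or.inr (Or.inr hh.2)⟩
    exact hT ⟨ρ', j', hj', y, hbd, r, a,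
      by rw [← passd a k0]; exact h0,
      by rw [← passd (a+1) k1]; exact h1,
      by rw [← passd (a+2) k2]; exact h2⟩
  -- d is in the window
  have hdwin : ρ' = r ∧ (j' = a ∨ j' = a+1 ∨ j' = a+2) := by
    by_contra hcon
    have k0 : ¬(ρ' = r ∧ j' = a) := fun hh => hcon ⟨hh.1, Or.inl hh.2⟩
    have k1 : ¬(ρ' = r ∧ j' = a+1) := fun hh => hcon ⟨hh.1, Or.inr (Or.inl hh.2)⟩
    have k2 : ¬(ρ' = r ∧ j' = a+2) := fun hh => hcon ⟨hh.1, Or.inr (Or.inr hh.2)⟩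
    exact hT ⟨ρ, j, hj, x, hc, r, a,
      by rw [← passc a k0]; exact h0,
      by rw [← passc (a+1) k1]; exact h1,
      by rw [← passc (a+2) k2]; exact h2⟩
  obtain ⟨hρr, hcpos⟩ := hcwin
  obtain ⟨hρ'r, hdpos⟩ := hdwin
  subst hρ'r; subst hρr
  have hjj' : j' ≠ j := by tauto
  have hxval : get b2 ρ j = some x := by
    rw [passc j (fun hh => hjj' hh.2), hb1, get_upd_self]
  have third : ∀ p v, get b2 ρ p = some v → j ≠ p → j' ≠ p → get b ρ p = some v := by
    intro p v h hp1 hp2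
    rw [← pass1 p (fun hh => hp1 hh.2) (fun hh => hp2 hh.2)]; exact h
  have hxeq : ∀ v, get b2 ρ j = some v → x = v := by
    intro v hv
    rw [hxval] at hv; injection hv with hv
  have hempd : emp b ρ j' := ⟨hj', hbd⟩
  refine ⟨a, ?_⟩
  rcases hcpos with hc0 | hc0 | hc0
  · rcases hdpos with hd0 | hd0 | hd0
    · exact absurd (hd0.trans hc0.symm) hjj'
    · refine Or.inl ⟨hc0, hxeq S (by rw [hc0]; exact h0), Or.inl ⟨by rw [hd0] at hempd; exact hempd, third (a+2) S h2 (by omega) (by omega)⟩⟩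
    · refine Or.inl ⟨hc0, hxeq S (by rw [hc0]; exact h0), Or.inr ⟨third (a+1) O h1 (by omega) (by omega), by rw [hd0] at hempd; exact hempd⟩⟩
  · rcases hdpos with hd0 | hd0 | hd0
    · refine Or.inr (Or.inl ⟨hc0, hxeq O (by rw [hc0]; exact h1), Or.inl ⟨by rw [hd0] at hempd; exact hempd, third (a+2) S h2 (by omega) (by omega)⟩⟩)
    · exact absurd (hd0.trans hc0.symm) hjj'
    · refine Or.inr (Or.inl ⟨hc0, hxeq O (by rw [hc0]; exact h1), Or.inr ⟨third a S h0 (by omega) (by omega), by rw [hd0] at hempd; exact hempd⟩⟩)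
  · rcases hdpos with hd0 | hd0 | hd0
    · refine Or.inr (Or.inr ⟨hc0, hxeq S (by rw [hc0]; exact h2), Or.inl ⟨by rw [hd0] at hempd; exact hempd, third (a+1) O h1 (by omega) (by omega)⟩⟩)
    · refine Or.inr (Or.inr ⟨hc0, hxeq S (by rw [hc0]; exact h2), Or.inr ⟨third a S h0 (by omega) (by omega), by rw [hd0] at hempd; exact hempd⟩⟩)
    · exact absurd (hd0.trans hc0.symm) hjj'

lemma pass_some {b : Bd n} {ρ : Fin 2} {j : ℕ} {x} (hj : j < n) (hc : get b ρ j = none)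
    {r p v} (h : get b r p = some v) : get (upd b ρ j hj x) r p = some v := by
  rcases eq_or_ne r ρ with rfl | hr
  · rcases eq_or_ne p j with rfl | hp
    · rw [hc] at h; cases h
    · rw [get_upd_ne hj (Or.inr hp)]; exact h
  · rw [get_upd_ne hj (Or.inl hr)]; exact h

lemma back_some {b : Bd n} {ρ : Fin 2} {j : ℕ} {x} {hj : j < n}
    {r p v} (h : get (upd b ρ j hj x) r p = some v) (hne : r ≠ ρ ∨ p ≠ j) :
    get b r p = some v := by
  rw [get_upd_ne hj hne] at h; exact h

lemma back_some_letter {b : Bd n} {ρ : Fin 2} {j : ℕ} {x} {hj : j < n}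
    {r p v} (h : get (upd b ρ j hj x) r p = some v) (hvx : v ≠ x) :
    get b r p = some v := by
  rcases eq_or_ne r ρ with rfl | hr
  · rcases eq_or_ne p j with rfl | hp
    · rw [get_upd_self] at h; injection h with h; exact absurd h.symm hvx
    · exact back_some h (Or.inr hp)
  · exact back_some h (Or.inl hr)

lemma back_none {b : Bd n} {ρ : Fin 2} {j : ℕ} {x} {hj : j < n}
    {r p} (h : get (upd b ρ j hj x) r p = none) : get b r p = none := by
  rcases eq_or_ne r ρ with rfl | hr
  · rcases eq_or_ne p j with rfl | hp
    · rw [get_upd_self] at h; cases h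
    · rw [get_upd_ne hj (Or.inr hp)] at h; exact h
  · rw [get_upd_ne hj (Or.inl hr)] at h; exact h

lemma back_emp {b : Bd n} {ρ : Fin 2} {j : ℕ} {x} {hj : j < n}
    {r p} (h : emp (upd b ρ j hj x) r p) : emp b r p :=
  ⟨h.1, back_none h.2⟩

lemma pass_none {b : Bd n} {ρ : Fin 2} {j : ℕ} {x} (hj : j < n)
    {r p} (hne : r ≠ ρ ∨ p ≠ j) (h : get b r p = none) :
    get (upd b ρ j hj x) r p = none := by
  rw [get_upd_ne hj hne]; exact h

lemma pass_emp {b : Bd n} {ρ : Fin 2} {j : ℕ} {x} (hj : j < n)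
    {r p} (hne : r ≠ ρ ∨ p ≠ j) (h : emp b r p) :
    emp (upd b ρ j hj x) r p :=
  ⟨h.1, pass_none hj hne h.2⟩

lemma not_win_upd {b : Bd n} {ρ : Fin 2} {j : ℕ} {x} (hj : j < n)
    (hc : get b ρ j = none) (hT : ¬ Threat b) : ¬ WinB (upd b ρ j hj x) :=
  fun hw => hT ⟨ρ, j, hj, x, hc, hw⟩

lemma safeO_char {b : Bd n} {ρ : Fin 2} {j : ℕ} (hj : j < n)
    (hc : get b ρ j = none) (hT : ¬ Threat b) (hT' : Threat (upd b ρ j hj Letter.O)) :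
    ∃ a, j = a+1 ∧ ((emp b ρ a ∧ get b ρ (a+2) = some S) ∨
      (get b ρ a = some S ∧ emp b ρ (a+2))) := by
  obtain ⟨a, hcase⟩ := threat_localize hj hc hT hT'
  rcases hcase with ⟨-, hx, -⟩ | ⟨h1, -, h2⟩ | ⟨-, hx, -⟩
  · cases hx
  · exact ⟨a, h1, h2⟩
  · cases hx

/-- If some cell is empty, there is no threat and no trap, then there is a safe
`O` move. -/
lemma safe_or_trap {b : Bd n} {ρ0 : Fin 2} {j0 : ℕ} (he : emp b ρ0 j0)
    (hT : ¬ Threat b) (hTrap : ¬ Trap b) :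
    ∃ r j, ∃ h : j < n, get b r j = none ∧ ¬ Threat (upd b r j h Letter.O) := by
  by_contra hno
  push_neg at hno
  have key : ∀ r j (h : j < n), get b r j = none →
      ∃ a, j = a+1 ∧ ((emp b r a ∧ get b r (a+2) = some S) ∨
        (get b r a = some S ∧ emp b r (a+2))) := by
    intro r j h hc
    exact safeO_char h hc hT (hno r j h hc)
  obtain ⟨a, ha1, hcase⟩ := key ρ0 j0 he.1 he.2
  rcases hcase with ⟨hempa, hS2⟩ | ⟨hSa, hemp2⟩
  · -- empty at a, S at a+2 : look at partner a
    obtain ⟨a', ha'1, hcase'⟩ := key ρ0 a hempa.1 hempa.2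
    rcases hcase' with ⟨hempa', hS2'⟩ | ⟨hSa', hemp2'⟩
    · -- get at a'+2 = a+1 = j0 : some S, but j0 empty
      rw [show a'+2 = a+1 by omega, ← ha1] at hS2'
      rw [he.2] at hS2'; cases hS2'
    · -- S at a' = a-1, empty at a'+2 = a+1 : trap a', a, a+1=j0? no:
      -- trap : S at a', emp a'+1 = a, emp a'+2 = a+1, S at a'+3 = a+2
      refine hTrap ⟨ρ0, a', hSa', ?_, hemp2', ?_⟩
      · rw [show a'+1 = a by omega]; exact hempa
      · rw [show a'+3 = a+2 by omega]; exact hS2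
  · -- S at a, empty at a+2 : look at partner a+2
    obtain ⟨a', ha'1, hcase'⟩ := key ρ0 (a+2) hemp2.1 hemp2.2
    have ha'' : a' = a+1 := by omega
    subst ha''
    rcases hcase' with ⟨hempa', hS2'⟩ | ⟨hSa', hemp2'⟩
    · -- empty at a+1 = j0? j0 = a+1 yes: consistent; S at a+3 : trap a..a+3
      exact hTrap ⟨ρ0, a, hSa, by rw [← ha1]; exact he, hemp2, hS2'⟩
    · -- S at a+1 = j0 : but j0 empty
      rw [← ha1] at hSa'; rw [he.2] at hSa'; cases hSa'

/-- A fixed-point-free involution on a finset makes its cardinality even. -/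
lemma even_pair {α : Type} [DecidableEq α] (f : α → α) :
    ∀ s : Finset α, (∀ a ∈ s, f a ∈ s ∧ f (f a) = a ∧ f a ≠ a) → Even s.card := by
  intro s
  induction s using Finset.strongInduction with
  | _ s ih =>
    intro hs
    rcases s.eq_empty_or_nonempty with rfl | ⟨a, ha⟩
    · simp
    obtain ⟨hfa, hffa, hne⟩ := hs a ha
    have hmem1 : f a ∈ s.erase a := Finset.mem_erase.2 ⟨hne, hfa⟩
    set t := (s.erase a).erase (f a) with ht
    have hsub : t ⊂ s := by
      refine ⟨(Finset.erase_subset _ _).trans (Finset.erase_subset _ _), fun hsub => ?_⟩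
      have := hsub ha
      rw [ht] at this
      exact (Finset.mem_erase.1 (Finset.mem_erase.1 this).2).1 rfl
    have hc1 : (s.erase a).card + 1 = s.card := Finset.card_erase_add_one ha
    have hc2 : t.card + 1 = (s.erase a).card := Finset.card_erase_add_one hmem1
    have hprop : ∀ c ∈ t, f c ∈ t ∧ f (f c) = c ∧ f c ≠ c := by
      intro c hc
      have hc' : c ∈ s := (Finset.erase_subset _ _) ((Finset.erase_subset _ _) hc)
      obtain ⟨h1, h2, h3⟩ := hs c hc'
      have hca : c ≠ f a := (Finset.mem_erase.1 hc).1
      have hca' : c ≠ a := (Finset.mem_erase.1 (Finset.mem_erase.1 hc).2).1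
      refine ⟨?_, h2, h3⟩
      rw [ht]
      refine Finset.mem_erase.2 ⟨?_, Finset.mem_erase.2 ⟨?_, h1⟩⟩
      · intro e; apply hca'; rw [← h2, e, hffa]
      · intro e; apply hca; rw [← h2, e]
    obtain ⟨k, hk⟩ := ih t hsub hprop
    exact ⟨k+1, by omega⟩

/-- Partner function for the parity argument. -/
def pf (b : Bd n) : Fin 2 × Fin n → Fin 2 × Fin n := fun c =>
  if 1 ≤ (c.2 : ℕ) ∧ get b c.1 ((c.2 : ℕ) - 1) = some S then
    (c.1, ⟨min ((c.2 : ℕ) + 1) (n - 1), by have := c.2.2; omega⟩)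
  else
    (c.1, ⟨(c.2 : ℕ) - 1, by have := c.2.2; omega⟩)

/-- If every empty cell is the middle of a half-completed trap, the number of
empty cells is even. -/
lemma allQ_even {b : Bd n}
    (hQ : ∀ c : Fin 2 × Fin n, b c = none → ∃ i, (c.2 : ℕ) = i + 1 ∧
      ((get b c.1 i = some S ∧ emp b c.1 (i+2)) ∨
       (emp b c.1 i ∧ get b c.1 (i+2) = some S))) :
    Even (cntE b) := by
  apply even_pair (pf b)
  intro c hc
  simp only [Finset.mem_filter, Finset.mem_univ, true_and] at hc ⊢
  obtain ⟨i, hi, hcase⟩ := hQ c hc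
  have hc2lt : (c.2 : ℕ) < n := c.2.2
  have hnone : get b c.1 (i+1) = none := by
    rw [get_eq (by omega)]
    have : c = (c.1, ⟨i+1, by omega⟩) := by
      refine Prod.ext rfl (Fin.ext ?_); simp [hi]
    rw [← this]; exact hc
  rcases hcase with ⟨hS, hemp⟩ | ⟨hemp, hS⟩
  · -- S at i, empty at i+2; partner is i+2
    have hcond : 1 ≤ (c.2 : ℕ) ∧ get b c.1 ((c.2 : ℕ) - 1) = some S := by
      constructor
      · omega
      · rw [show (c.2 : ℕ) - 1 = i by omega]; exact hS
    have hfc : pf b c = (c.1, ⟨i+2, hemp.1⟩) := by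
      unfold pf
      rw [if_pos hcond]
      refine Prod.ext rfl (Fin.ext ?_)
      show min ((c.2 : ℕ) + 1) (n - 1) = i + 2
      have := hemp.1
      omega
    have hfcnone : b (c.1, (⟨i+2, hemp.1⟩ : Fin n)) = none := by
      have h2 := hemp.2
      rw [get_eq hemp.1] at h2; exact h2
    refine ⟨by rw [hfc]; exact hfcnone, ?_, ?_⟩
    · rw [hfc]
      unfold pf
      rw [if_neg]
      · refine Prod.ext rfl (Fin.ext ?_); simp; omega
      · rintro ⟨-, hcon⟩
        simp only [show i+2-1 = i+1 from rfl] at hcon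
        rw [hnone] at hcon; cases hcon
    · rw [hfc]
      intro e
      have := congrArg (fun z => (z.2 : ℕ)) e
      simp at this; omega
  · -- empty at i, S at i+2; partner is i
    have hfc : pf b c = (c.1, ⟨i, hemp.1⟩) := by
      unfold pf
      rw [if_neg]
      · refine Prod.ext rfl (Fin.ext ?_); simp; omega
      · rintro ⟨-, hcon⟩
        rw [show (c.2 : ℕ) - 1 = i by omega, hemp.2] at hcon; cases hcon
    have hfcnone : b (c.1, (⟨i, hemp.1⟩ : Fin n)) = none := by
      have h2 := hemp.2
      rw [get_eq hemp.1] at h2; exact h2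
    refine ⟨by rw [hfc]; exact hfcnone, ?_, ?_⟩
    · rw [hfc]
      obtain ⟨i'', hi'', hcase''⟩ := hQ _ hfcnone
      simp only [] at hi''
      rcases hcase'' with ⟨hS'', hemp''⟩ | ⟨hemp'', hS''⟩
      · unfold pf
        rw [if_pos]
        · refine Prod.ext rfl (Fin.ext ?_); simp; omega
        · constructor
          · simp; omega
          · simp only []
            rw [show (i : ℕ) - 1 = i'' by omega]; exact hS''
      · exfalso
        rw [show i''+2 = i+1 by omega, hnone] at hS''; cases hS''
    · rw [hfc]
      intro e
      have := congrArg (fun z => (z.2 : ℕ)) e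
      simp at this; omega

lemma nand {r ρ : Fin 2} {p j : ℕ} (h : ¬(r = ρ ∧ p = j)) : r ≠ ρ ∨ p ≠ j :=
  not_and_or.mp h

lemma upd_letter {b : Bd n} {ρ : Fin 2} {j : ℕ} {x v} {hj : j < n}
    (h : get (upd b ρ j hj x) ρ j = some v) : x = v := by
  rw [get_upd_self] at h; injection h

lemma trap_back {b : Bd n} {ρ : Fin 2} {j : ℕ} {x} {hj : j < n}
    (hc : get b ρ j = none) : Trap (upd b ρ j hj x) → Trap b ∨ PreTrap b := by
  rintro ⟨r, i, h0, h1, h2, h3⟩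
  by_cases e0 : r = ρ ∧ i = j
  · obtain ⟨e1, e2⟩ := e0; subst e1; subst e2
    refine Or.inr ⟨r, i, Or.inr ⟨⟨hj, hc⟩, back_emp h1, back_emp h2, ?_⟩⟩
    exact back_some h3 (Or.inr (by omega))
  · by_cases e3 : r = ρ ∧ i + 3 = j
    · obtain ⟨e1, e2⟩ := e3; subst e1
      refine Or.inr ⟨r, i, Or.inl ⟨?_, back_emp h1, back_emp h2, ?_⟩⟩
      · exact back_some h0 (Or.inr (by omega))
      · rw [e2]; exact ⟨hj, hc⟩
    · exact Or.inl ⟨r, i, back_some h0 (nand e0), back_emp h1, back_emp h2,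
        back_some h3 (nand e3)⟩

lemma pretrap_back {b : Bd n} {ρ : Fin 2} {j : ℕ} {x} {hj : j < n}
    (hc : get b ρ j = none) : PreTrap (upd b ρ j hj x) → PreTrap b ∨
      (x = S ∧ ((emp b ρ (j+1) ∧ emp b ρ (j+2) ∧ emp b ρ (j+3)) ∨
        (∃ i, j = i + 3 ∧ emp b ρ i ∧ emp b ρ (i+1) ∧ emp b ρ (i+2)))) := by
  rintro ⟨r, i, ⟨h0, h1, h2, h3⟩ | ⟨h0, h1, h2, h3⟩⟩
  · by_cases e0 : r = ρ ∧ i = j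
    · obtain ⟨e1, e2⟩ := e0; subst e1; subst e2
      exact Or.inr ⟨upd_letter h0, Or.inl ⟨back_emp h1, back_emp h2, back_emp h3⟩⟩
    · exact Or.inl ⟨r, i, Or.inl ⟨back_some h0 (nand e0), back_emp h1,
        back_emp h2, back_emp h3⟩⟩
  · by_cases e3 : r = ρ ∧ i + 3 = j
    · obtain ⟨e1, e2⟩ := e3; subst e1
      rw [e2] at h3
      exact Or.inr ⟨upd_letter h3, Or.inr ⟨i, e2.symm,
        back_emp h0, back_emp h1, back_emp h2⟩⟩
    · exact Or.inl ⟨r, i, Or.inr ⟨back_emp h0, back_emp h1, back_emp h2,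
        back_some h3 (nand e3)⟩⟩

/-- Playing any letter in the left gap cell of a trap creates a threat. -/
lemma gap_threat1 {b : Bd n} {r : Fin 2} {i : ℕ} {x}
    (h0 : get b r i = some S) (h1 : emp b r (i+1)) (h2 : emp b r (i+2))
    (h3 : get b r (i+3) = some S) :
    Threat (upd b r (i+1) h1.1 x) := by
  have hn2 : get (upd b r (i+1) h1.1 x) r (i+2) = none :=
    pass_none h1.1 (Or.inr (by omega)) h2.2
  cases x
  · -- S : reply O at i+2, window i+1..i+3
    refine ⟨r, i+2, h2.1, O, hn2, r, i+1, ?_, ?_, ?_⟩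
    · exact pass_some h2.1 hn2 (get_upd_self h1.1)
    · exact get_upd_self h2.1
    · exact pass_some h2.1 hn2 (pass_some h1.1 h1.2 h3)
  · -- O : reply S at i+2, window i..i+2
    refine ⟨r, i+2, h2.1, S, hn2, r, i, ?_, ?_, ?_⟩
    · exact pass_some h2.1 hn2 (pass_some h1.1 h1.2 h0)
    · exact pass_some h2.1 hn2 (get_upd_self h1.1)
    · exact get_upd_self h2.1

/-- Playing any letter in the right gap cell of a trap creates a threat. -/
lemma gap_threat2 {b : Bd n} {r : Fin 2} {i : ℕ} {x}
    (h0 : get b r i = some S) (h1 : emp b r (i+1)) (h2 : emp b r (i+2))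
    (h3 : get b r (i+3) = some S) :
    Threat (upd b r (i+2) h2.1 x) := by
  have hn1 : get (upd b r (i+2) h2.1 x) r (i+1) = none :=
    pass_none h2.1 (Or.inr (by omega)) h1.2
  cases x
  · -- S at i+2 : reply O at i+1, window i..i+2
    refine ⟨r, i+1, h1.1, O, hn1, r, i, ?_, ?_, ?_⟩
    · exact pass_some h1.1 hn1 (pass_some h2.1 h2.2 h0)
    · exact get_upd_self h1.1
    · exact pass_some h1.1 hn1 (get_upd_self h2.1)
  · -- O at i+2 : reply S at i+1, window i+1..i+3
    refine ⟨r, i+1, h1.1, S, hn1, r, i+1, ?_, ?_, ?_⟩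
    · exact get_upd_self h1.1
    · exact pass_some h1.1 hn1 (get_upd_self h2.1)
    · exact pass_some h1.1 hn1 (pass_some h2.1 h2.2 h3)

/-- The main induction: with a trap on the board, the player NOT to move wins.
Part A: odd number of empties and (threat or trap) → mover (the winner) wins.
Part B: even number of empties, no threat, trap present → mover loses. -/
lemma AB : ∀ m : ℕ, ∀ b : Bd n, cntE b = m → ¬ WinB b →
    ((Odd m → (Threat b ∨ Trap b) → Force WinB m true b) ∧
     (Even m → ¬ Threat b → Trap b → ¬ Force WinB m false b)) := by
  intro m
  induction m using Nat.strong_induction_on with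
  | _ m ih =>
  intro b hcnt hnw
  constructor
  · -- Part A
    intro hodd hTT
    by_cases hth : Threat b
    · obtain ⟨r, j, hj, x, hcell, hwin⟩ := hth
      have hpos : 0 < m := hcnt ▸ cnt_pos ⟨hj, hcell⟩
      obtain ⟨k, rfl⟩ : ∃ k, m = k + 1 := ⟨m - 1, by omega⟩
      refine ⟨(r, ⟨j, hj⟩), x, ?_, Or.inl hwin⟩
      have := hcell; rw [get_eq hj] at this; exact this
    · have hTrap := hTT.resolve_left hth
      obtain ⟨r, i, h0, h1, h2, h3⟩ := hTrap
      have hpos : 0 < m := hcnt ▸ cnt_pos h1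
      by_cases hsafe : ∃ ρ j, ∃ h : j < n, get b ρ j = none ∧
          ¬(ρ = r ∧ (j = i+1 ∨ j = i+2)) ∧ ¬ Threat (upd b ρ j h O)
      · obtain ⟨ρ, j, hj, hcell, hout, hsafeT⟩ := hsafe
        have hne1 : r ≠ ρ ∨ i+1 ≠ j := by
          by_cases hρ : ρ = r
          · exact Or.inr (fun e => hout ⟨hρ, Or.inl e.symm⟩)
          · exact Or.inl (fun e => hρ e.symm)
        have hne2 : r ≠ ρ ∨ i+2 ≠ j := by
          by_cases hρ : ρ = r
          · exact Or.inr (fun e => hout ⟨hρ, Or.inr e.symm⟩)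
          · exact Or.inl (fun e => hρ e.symm)
        have htrap' : Trap (upd b ρ j hj O) :=
          ⟨r, i, pass_some hj hcell h0, pass_emp hj hne1 h1, pass_emp hj hne2 h2,
            pass_some hj hcell h3⟩
        have hcnt' : cntE (upd b ρ j hj O) = m - 1 := by
          have := cnt_upd (b := b) (x := O) hj hcell
          omega
        have hnw' : ¬ WinB (upd b ρ j hj O) := not_win_upd hj hcell hth
        obtain ⟨kk, hkk⟩ := hodd
        have heven : Even (m - 1) := ⟨kk, by omega⟩
        have hB := (ih (m-1) (by omega) _ hcnt' hnw').2 heven hsafeT htrap'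
        obtain ⟨k, rfl⟩ : ∃ k, m = k + 1 := ⟨m - 1, by omega⟩
        refine ⟨(ρ, ⟨j, hj⟩), O, ?_, Or.inr (by simpa [upd] using hB)⟩
        have := hcell; rw [get_eq hj] at this; exact this
      · -- no safe move outside the gap : parity contradiction
        exfalso
        push_neg at hsafe
        have hQ : ∀ c : Fin 2 × Fin n, b c = none → ∃ i', (c.2 : ℕ) = i' + 1 ∧
            ((get b c.1 i' = some S ∧ emp b c.1 (i'+2)) ∨
             (emp b c.1 i' ∧ get b c.1 (i'+2) = some S)) := by
          intro c hc
          have hcg : get b c.1 (c.2 : ℕ) = none := by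
            rw [get_eq c.2.2]; exact hc
          by_cases hgap : c.1 = r ∧ ((c.2 : ℕ) = i+1 ∨ (c.2 : ℕ) = i+2)
          · obtain ⟨e1, e2⟩ := hgap
            rcases e2 with e2 | e2
            · exact ⟨i, e2, Or.inl ⟨by rw [e1]; exact h0, by rw [e1]; exact h2⟩⟩
            · exact ⟨i+1, e2, Or.inr ⟨by rw [e1]; exact h1, by rw [e1]; exact h3⟩⟩
          · have hthreat := hsafe c.1 (c.2 : ℕ) c.2.2 hcg
              (fun h1 => ⟨fun h2 => hgap ⟨h1, Or.inl h2⟩, fun h2 => hgap ⟨h1, Or.inr h2⟩⟩)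
            obtain ⟨a, ha, hcase⟩ := safeO_char c.2.2 hcg hth hthreat
            exact ⟨a, ha, hcase.symm⟩
        have := allQ_even hQ
        rw [hcnt] at this
        exact (Nat.not_even_iff_odd.mpr hodd) this
  · -- Part B
    intro heven hth htrap
    have hpos : 0 < m := hcnt ▸ cnt_pos htrap.choose_spec.choose_spec.2.1
    obtain ⟨k, rfl⟩ : ∃ k, m = k + 1 := ⟨m - 1, by omega⟩
    rintro ⟨⟨ρ, jf⟩, x, hcell, hcase⟩
    obtain ⟨j, hj⟩ := jf
    have hcellg : get b ρ j = none := by rw [get_eq hj]; exact hcell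
    have hb' : Function.update b (ρ, ⟨j, hj⟩) (some x) = upd b ρ j hj x := rfl
    rw [hb'] at hcase
    rcases hcase with hwin | hforce
    · exact hth ⟨ρ, j, hj, x, hcellg, hwin⟩
    · apply hforce
      have hcnt' : cntE (upd b ρ j hj x) = k := by
        have := cnt_upd (b := b) (x := x) hj hcellg
        omega
      have hnw' : ¬ WinB (upd b ρ j hj x) := not_win_upd hj hcellg hth
      have hodd : Odd k := by
        rcases heven with ⟨kk, hkk⟩
        exact ⟨kk - 1, by omega⟩
      have hTT' : Threat (upd b ρ j hj x) ∨ Trap (upd b ρ j hj x) := by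
        obtain ⟨r, i, h0, h1, h2, h3⟩ := htrap
        by_cases e1 : ρ = r ∧ j = i+1
        · obtain ⟨f1, f2⟩ := e1; subst f1; subst f2
          exact Or.inl (gap_threat1 h0 h1 h2 h3)
        · by_cases e2 : ρ = r ∧ j = i+2
          · obtain ⟨f1, f2⟩ := e2; subst f1; subst f2
            exact Or.inl (gap_threat2 h0 h1 h2 h3)
          · refine Or.inr ⟨r, i, pass_some hj hcellg h0, ?_, ?_, pass_some hj hcellg h3⟩
            · refine pass_emp hj ?_ h1
              by_cases hρ : ρ = r
              · exact Or.inr (fun e => e1 ⟨hρ, e.symm⟩)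
              · exact Or.inl (fun e => hρ e.symm)
            · refine pass_emp hj ?_ h2
              by_cases hρ : ρ = r
              · exact Or.inr (fun e => e2 ⟨hρ, e.symm⟩)
              · exact Or.inl (fun e => hρ e.symm)
      have hA := (ih k (by omega) _ hcnt' hnw').1 hodd hTT'
      simpa using hA

lemma SneO : (S : Letter) ≠ O := by decide

lemma cnt_ex {b : Bd n} (h : 0 < cntE b) : ∃ r j, ∃ hj : j < n, get b r j = none := by
  obtain ⟨⟨r, jf⟩, hc⟩ := Finset.card_pos.mp h
  simp only [cntE, Finset.mem_filter, Finset.mem_univ, true_and] at hc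
  exact ⟨r, jf.1, jf.2, by rw [get_eq jf.2]; exact hc⟩

/-- Draw lemma, part E: on a small board, in a clean position the player to
move cannot force a win. -/
lemma lemE (h7 : n < 7) : ∀ m : ℕ, ∀ b : Bd n, cntE b = m → ¬ WinB b →
    ¬ Threat b → ¬ Trap b → ¬ PreTrap b → ¬ Force WinB m true b := by
  intro m
  induction m using Nat.strong_induction_on with
  | _ m ih =>
  intro b hcnt hnw hth htr hpre
  match m, hcnt with
  | 0, hcnt => intro hf; exact absurd hf (by simp [Force])
  | (k+1), hcnt => ?_
  rintro ⟨⟨ρ, ⟨j, hj⟩⟩, x, hcell, hcase⟩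
  have hcellg : get b ρ j = none := by rw [get_eq hj]; exact hcell
  have hb' : Function.update b (ρ, ⟨j, hj⟩) (some x) = upd b ρ j hj x := rfl
  rw [hb'] at hcase
  rcases hcase with hwin | hforce
  · exact hth ⟨ρ, j, hj, x, hcellg, hwin⟩
  apply hforce
  have hcnt1 : cntE (upd b ρ j hj x) = k := by
    have := cnt_upd (b := b) (x := x) hj hcellg; omega
  have hnw1 : ¬ WinB (upd b ρ j hj x) := not_win_upd hj hcellg hth
  by_cases hth1 : Threat (upd b ρ j hj x)
  · -- immediate winning reply
    obtain ⟨r', j', hj', y, hcell', hwin'⟩ := hth1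
    have hpos : 0 < k := hcnt1 ▸ cnt_pos ⟨hj', hcell'⟩
    obtain ⟨k', rfl⟩ : ∃ k', k = k' + 1 := ⟨k - 1, by omega⟩
    refine ⟨(r', ⟨j', hj'⟩), y, ?_, Or.inl hwin'⟩
    have := hcell'; rw [get_eq hj'] at this; exact this
  · have htr1 : ¬ Trap (upd b ρ j hj x) := by
      intro h; rcases trap_back hcellg h with h | h
      exacts [htr h, hpre h]
    by_cases hpre1 : PreTrap (upd b ρ j hj x)
    · -- the move created a pre-trap; kill it
      rcases pretrap_back hcellg hpre1 with h | ⟨hxS, hvar⟩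
      · exact absurd h hpre
      subst hxS
      rcases hvar with ⟨hL1, hL2, hL3⟩ | ⟨iR, hjiR, hR1, hR2, hR3⟩
      · -- S at j with j+1,j+2,j+3 empty (in b) : kill at j+2
        have hL1' : emp (upd b ρ j hj S) ρ (j+1) := pass_emp hj (Or.inr (by omega)) hL1
        have hL2' : emp (upd b ρ j hj S) ρ (j+2) := pass_emp hj (Or.inr (by omega)) hL2
        have hL3' : emp (upd b ρ j hj S) ρ (j+3) := pass_emp hj (Or.inr (by omega)) hL3
        have hpos : 0 < k := hcnt1 ▸ cnt_pos hL2'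
        obtain ⟨k', rfl⟩ : ∃ k', k = k' + 1 := ⟨k - 1, by omega⟩
        refine ⟨(ρ, ⟨j+2, hL2'.1⟩), O, by
          have := hL2'.2; rw [get_eq hL2'.1] at this; exact this, Or.inr ?_⟩
        have hb2 : Function.update (upd b ρ j hj S) (ρ, ⟨j+2, hL2'.1⟩) (some O) =
            upd (upd b ρ j hj S) ρ (j+2) hL2'.1 O := rfl
        rw [hb2]
        -- properties of b2
        have hth2 : ¬ Threat (upd (upd b ρ j hj S) ρ (j+2) hL2'.1 O) := by
          intro hcon
          obtain ⟨a, ha, hcc⟩ := safeO_char hL2'.1 hL2'.2 hth1 hcon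
          have ha' : a = j + 1 := by omega
          subst ha'
          rcases hcc with ⟨-, hs⟩ | ⟨hs, -⟩
          · rw [show j+1+2 = j+3 by omega] at hs
            rw [hL3'.2] at hs; cases hs
          · rw [hL1'.2] at hs; cases hs
        have hnw2 : ¬ WinB (upd (upd b ρ j hj S) ρ (j+2) hL2'.1 O) :=
          not_win_upd hL2'.1 hL2'.2 hth1
        have htr2 : ¬ Trap (upd (upd b ρ j hj S) ρ (j+2) hL2'.1 O) := by
          rintro ⟨r, iT, g0, g1, g2, g3⟩
          have g1b : emp b r (iT+1) := back_emp (back_emp g1)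
          have g2b : emp b r (iT+2) := back_emp (back_emp g2)
          have g0' := back_some_letter g0 SneO
          have g3' := back_some_letter g3 SneO
          by_cases e0 : r = ρ ∧ iT = j
          · obtain ⟨f1, f2⟩ := e0; subst f1; subst f2
            have := g2.2
            rw [get_upd_self] at this; cases this
          · by_cases e3 : r = ρ ∧ iT + 3 = j
            · obtain ⟨f1, f2⟩ := e3; subst f1
              refine hpre ⟨r, iT, Or.inl ⟨?_, g1b, g2b, ?_⟩⟩
              · exact back_some g0' (Or.inr (by omega))
              · rw [f2]; exact ⟨hj, hcellg⟩
            · exact htr ⟨r, iT, back_some g0' (nand e0), g1b, g2b,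
                back_some g3' (nand e3)⟩
        have hpre2 : ¬ PreTrap (upd (upd b ρ j hj S) ρ (j+2) hL2'.1 O) := by
          rintro ⟨r, iP, ⟨g0, g1, g2, g3⟩ | ⟨g0, g1, g2, g3⟩⟩
          · -- S at iP, empties iP+1..iP+3
            have g0' := back_some_letter g0 SneO
            by_cases e0 : r = ρ ∧ iP = j
            · obtain ⟨f1, f2⟩ := e0; subst f1; subst f2
              have := g2.2
              rw [get_upd_self] at this; cases this
            · exact hpre ⟨r, iP, Or.inl ⟨back_some g0' (nand e0),
                back_emp (back_emp g1), back_emp (back_emp g2),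
                back_emp (back_emp g3)⟩⟩
          · -- empties iP..iP+2, S at iP+3
            have g3' := back_some_letter g3 SneO
            by_cases e3 : r = ρ ∧ iP + 3 = j
            · obtain ⟨f1, f2⟩ := e3
              -- empties j-3..j-1 and j+1..j+3 in b : board too small
              have := hL3.1
              omega
            · exact hpre ⟨r, iP, Or.inr ⟨back_emp (back_emp g0),
                back_emp (back_emp g1), back_emp (back_emp g2),
                back_some g3' (nand e3)⟩⟩
        have hcnt2 : cntE (upd (upd b ρ j hj S) ρ (j+2) hL2'.1 O) = k' := by
          have := cnt_upd (b := upd b ρ j hj S) (x := O) hL2'.1 hL2'.2; omega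
        exact ih k' (by omega) _ hcnt2 hnw2 hth2 htr2 hpre2
      · -- empties at iR..iR+2 with S at iR+3 = j : kill at iR+1
        subst hjiR
        have hR1' : emp (upd b ρ (iR+3) hj S) ρ iR := pass_emp hj (Or.inr (by omega)) hR1
        have hR2' : emp (upd b ρ (iR+3) hj S) ρ (iR+1) := pass_emp hj (Or.inr (by omega)) hR2
        have hR3' : emp (upd b ρ (iR+3) hj S) ρ (iR+2) := pass_emp hj (Or.inr (by omega)) hR3
        have hpos : 0 < k := hcnt1 ▸ cnt_pos hR2'
        obtain ⟨k', rfl⟩ : ∃ k', k = k' + 1 := ⟨k - 1, by omega⟩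
        refine ⟨(ρ, ⟨iR+1, hR2'.1⟩), O, by
          have := hR2'.2; rw [get_eq hR2'.1] at this; exact this, Or.inr ?_⟩
        have hb2 : Function.update (upd b ρ (iR+3) hj S) (ρ, ⟨iR+1, hR2'.1⟩) (some O) =
            upd (upd b ρ (iR+3) hj S) ρ (iR+1) hR2'.1 O := rfl
        rw [hb2]
        have hth2 : ¬ Threat (upd (upd b ρ (iR+3) hj S) ρ (iR+1) hR2'.1 O) := by
          intro hcon
          obtain ⟨a, ha, hcc⟩ := safeO_char hR2'.1 hR2'.2 hth1 hcon
          have ha' : a = iR := by omega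
          subst ha'
          rcases hcc with ⟨-, hs⟩ | ⟨hs, -⟩
          · rw [hR3'.2] at hs; cases hs
          · rw [hR1'.2] at hs; cases hs
        have hnw2 : ¬ WinB (upd (upd b ρ (iR+3) hj S) ρ (iR+1) hR2'.1 O) :=
          not_win_upd hR2'.1 hR2'.2 hth1
        have htr2 : ¬ Trap (upd (upd b ρ (iR+3) hj S) ρ (iR+1) hR2'.1 O) := by
          rintro ⟨r, iT, g0, g1, g2, g3⟩
          have g1b : emp b r (iT+1) := back_emp (back_emp g1)
          have g2b : emp b r (iT+2) := back_emp (back_emp g2)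
          have g0' := back_some_letter g0 SneO
          have g3' := back_some_letter g3 SneO
          by_cases e0 : r = ρ ∧ iT = iR + 3
          · obtain ⟨f1, f2⟩ := e0; subst f1; subst f2
            refine hpre ⟨r, iR+3, Or.inr ⟨⟨hj, hcellg⟩, g1b, g2b, ?_⟩⟩
            exact back_some g3' (Or.inr (by omega))
          · by_cases e3 : r = ρ ∧ iT + 3 = iR + 3
            · obtain ⟨f1, f2⟩ := e3; subst f1
              have f2' : iT = iR := by omega
              subst f2'
              have := g1.2
              rw [get_upd_self] at this; cases this
            · exact htr ⟨r, iT, back_some g0' (nand e0), g1b, g2b,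
                back_some g3' (nand e3)⟩
        have hpre2 : ¬ PreTrap (upd (upd b ρ (iR+3) hj S) ρ (iR+1) hR2'.1 O) := by
          rintro ⟨r, iP, ⟨g0, g1, g2, g3⟩ | ⟨g0, g1, g2, g3⟩⟩
          · have g0' := back_some_letter g0 SneO
            by_cases e0 : r = ρ ∧ iP = iR + 3
            · obtain ⟨f1, f2⟩ := e0
              -- empties iR..iR+2 and j+1..j+3 : board too small
              have h1 := (back_emp (back_emp g3)).1
              omega
            · exact hpre ⟨r, iP, Or.inl ⟨back_some g0' (nand e0),
                back_emp (back_emp g1), back_emp (back_emp g2),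
                back_emp (back_emp g3)⟩⟩
          · have g3' := back_some_letter g3 SneO
            by_cases e3 : r = ρ ∧ iP + 3 = iR + 3
            · obtain ⟨f1, f2⟩ := e3; subst f1
              have f2' : iP = iR := by omega
              subst f2'
              have := g1.2
              rw [get_upd_self] at this; cases this
            · exact hpre ⟨r, iP, Or.inr ⟨back_emp (back_emp g0),
                back_emp (back_emp g1), back_emp (back_emp g2),
                back_some g3' (nand e3)⟩⟩
        have hcnt2 : cntE (upd (upd b ρ (iR+3) hj S) ρ (iR+1) hR2'.1 O) = k' := by
          have := cnt_upd (b := upd b ρ (iR+3) hj S) (x := O) hR2'.1 hR2'.2; omega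
        exact ih k' (by omega) _ hcnt2 hnw2 hth2 htr2 hpre2
    · -- clean position after the opponent's move : make any safe move
      rcases Nat.eq_zero_or_pos k with rfl | hpos
      · rfl
      obtain ⟨r0, j0, hj0, hcell0⟩ := cnt_ex (hcnt1 ▸ hpos)
      obtain ⟨r', j', hj', hcell', hsafeT'⟩ :=
        safe_or_trap (b := upd b ρ j hj x) ⟨hj0, hcell0⟩ hth1 htr1
      obtain ⟨k', rfl⟩ : ∃ k', k = k' + 1 := ⟨k - 1, by omega⟩
      refine ⟨(r', ⟨j', hj'⟩), O, by
        have := hcell'; rw [get_eq hj'] at this; exact this, Or.inr ?_⟩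
      have hb2 : Function.update (upd b ρ j hj x) (r', ⟨j', hj'⟩) (some O) =
          upd (upd b ρ j hj x) r' j' hj' O := rfl
      rw [hb2]
      have htr2 : ¬ Trap (upd (upd b ρ j hj x) r' j' hj' O) := by
        intro h; rcases trap_back hcell' h with h | h
        exacts [htr1 h, hpre1 h]
      have hpre2 : ¬ PreTrap (upd (upd b ρ j hj x) r' j' hj' O) := by
        intro h; rcases pretrap_back hcell' h with h | ⟨hOS, -⟩
        exacts [hpre1 h, absurd hOS.symm SneO]
      have hcnt2 : cntE (upd (upd b ρ j hj x) r' j' hj' O) = k' := by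
        have := cnt_upd (b := upd b ρ j hj x) (x := O) hj' hcell'; omega
      exact ih k' (by omega) _ hcnt2 (not_win_upd hj' hcell' hth1) hsafeT' htr2 hpre2

/-- Draw lemma, part F: on a small board, in a clean position the player to
move can force at least a draw. -/
lemma lemF (h7 : n < 7) (m : ℕ) (b : Bd n) (hcnt : cntE b = m) (hnw : ¬ WinB b)
    (hth : ¬ Threat b) (htr : ¬ Trap b) (hpre : ¬ PreTrap b) :
    Force WinB m false b := by
  match m, hcnt with
  | 0, hcnt => rfl
  | (k+1), hcnt => ?_
  obtain ⟨r0, j0, hj0, hcell0⟩ := cnt_ex (by omega : 0 < cntE b)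
  obtain ⟨r', j', hj', hcell', hsafeT'⟩ := safe_or_trap ⟨hj0, hcell0⟩ hth htr
  refine ⟨(r', ⟨j', hj'⟩), O, by
    have := hcell'; rw [get_eq hj'] at this; exact this, Or.inr ?_⟩
  have hb1 : Function.update b (r', ⟨j', hj'⟩) (some O) = upd b r' j' hj' O := rfl
  rw [hb1]
  have htr1 : ¬ Trap (upd b r' j' hj' O) := by
    intro h; rcases trap_back hcell' h with h | h
    exacts [htr h, hpre h]
  have hpre1 : ¬ PreTrap (upd b r' j' hj' O) := by
    intro h; rcases pretrap_back hcell' h with h | ⟨hOS, -⟩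
    exacts [hpre h, absurd hOS.symm SneO]
  have hcnt1 : cntE (upd b r' j' hj' O) = k := by
    have := cnt_upd (b := b) (x := O) hj' hcell'; omega
  exact lemE h7 k _ hcnt1 (not_win_upd hj' hcell' hth) hsafeT' htr1 hpre1

lemma get_init {r : Fin 2} {p : ℕ} : get (fun _ : Fin 2 × Fin n => none) r p = none := by
  unfold get; split <;> rfl

lemma nwin_one {b : Bd n} {r1 : Fin 2} {p1 : ℕ}
    (hsub : ∀ r p v, get b r p = some v → (r = r1 ∧ p = p1)) : ¬ WinB b := by
  rintro ⟨r, a, h0, h1, h2⟩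
  have A := (hsub r a S h0).2
  have B := (hsub r (a+1) O h1).2
  omega

lemma nwin_three {b : Bd n} {r1 r2 r3 : Fin 2} {p1 p2 p3 : ℕ} (hrow : r1 ≠ r2)
    (hsub : ∀ r p v, get b r p = some v →
      (r = r1 ∧ p = p1) ∨ (r = r2 ∧ p = p2) ∨ (r = r3 ∧ p = p3)) : ¬ WinB b := by
  rintro ⟨r, a, h0, h1, h2⟩
  rcases hsub r a S h0 with ⟨Ar, Ac⟩ | ⟨Ar, Ac⟩ | ⟨Ar, Ac⟩ <;>
    rcases hsub r (a+1) O h1 with ⟨Br, Bc⟩ | ⟨Br, Bc⟩ | ⟨Br, Bc⟩ <;>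
      rcases hsub r (a+2) S h2 with ⟨Cr, Cc⟩ | ⟨Cr, Cc⟩ | ⟨Cr, Cc⟩ <;>
        first
          | omega
          | exact hrow (Ar.symm.trans Br)
          | exact hrow (Ar.symm.trans Cr)
          | exact hrow (Br.symm.trans Cr)
          | exact hrow (Br.symm.trans Ar)
          | exact hrow (Cr.symm.trans Ar)
          | exact hrow (Cr.symm.trans Br)

lemma cnt_init : cntE (fun _ : Fin 2 × Fin n => none) = 2 * n := by
  unfold cntE
  rw [Finset.filter_true_of_mem (fun _ _ => rfl)]
  simp [Finset.card_univ]

/-- Clean initial position facts. -/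
lemma init_clean : ¬ WinB (fun _ : Fin 2 × Fin n => none) ∧
    ¬ Threat (fun _ : Fin 2 × Fin n => none) ∧
    ¬ Trap (fun _ : Fin 2 × Fin n => none) ∧
    ¬ PreTrap (fun _ : Fin 2 × Fin n => none) := by
  refine ⟨?_, ?_, ?_, ?_⟩
  · rintro ⟨r, a, h0, -, -⟩; rw [get_init] at h0; cases h0
  · rintro ⟨r, j, hj, x, -, hwin⟩
    refine nwin_one (r1 := r) (p1 := j) ?_ hwin
    intro r' p v hv
    by_cases e : r' = r ∧ p = j
    · exact e
    · rw [get_upd_ne hj (nand e), get_init] at hv; cases hv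
  · rintro ⟨r, a, h0, -, -, -⟩; rw [get_init] at h0; cases h0
  · rintro ⟨r, a, ⟨h0, -, -, -⟩ | ⟨-, -, -, h3⟩⟩
    · rw [get_init] at h0; cases h0
    · rw [get_init] at h3; cases h3

def flipr (r : Fin 2) : Fin 2 := ⟨1 - (r : ℕ), by omega⟩

lemma flipr_ne (r : Fin 2) : flipr r ≠ r := by
  have := r.2
  intro h
  have := congrArg Fin.val h
  simp only [flipr] at this
  omega

/-- Second player wins when `n ≥ 7`. -/
lemma second_wins (h7 : 7 ≤ n) :
    ¬ Force WinB (2 * n) false (fun _ : Fin 2 × Fin n => none) := by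
  intro hF
  rw [show 2 * n = (2 * n - 1) + 1 by omega] at hF
  obtain ⟨⟨ρ1, ⟨j1, hj1⟩⟩, x1, hcell1, hcase1⟩ := hF
  have hb1 : Function.update (fun _ : Fin 2 × Fin n => none) (ρ1, ⟨j1, hj1⟩) (some x1) =
      upd (fun _ : Fin 2 × Fin n => none) ρ1 j1 hj1 x1 := rfl
  rw [hb1] at hcase1
  set b0 : Bd n := fun _ => none with hb0
  set b1 : Bd n := upd b0 ρ1 j1 hj1 x1 with hb1'
  have hcell1g : get b0 ρ1 j1 = none := get_init
  have hget1 : ∀ r p v, get b1 r p = some v → (r = ρ1 ∧ p = j1) := by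
    intro r p v hv
    by_cases e : r = ρ1 ∧ p = j1
    · exact e
    · rw [hb1', get_upd_ne hj1 (nand e)] at hv
      rw [hb0] at hv
      rw [get_init] at hv; cases hv
  rcases hcase1 with hwin1 | hnf1
  · exact nwin_one hget1 hwin1
  apply hnf1
  -- second player's reply : S at (flipr ρ1, 3)
  have h3n : (3 : ℕ) < n := by omega
  have hne10 : flipr ρ1 ≠ ρ1 := flipr_ne ρ1
  have hcell2g : get b1 (flipr ρ1) 3 = none := by
    rw [hb1', get_upd_ne hj1 (Or.inl hne10), hb0, get_init]
  rw [show 2 * n - 1 = (2 * n - 2) + 1 by omega]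
  refine ⟨(flipr ρ1, ⟨3, h3n⟩), S, by
    have := hcell2g; rw [get_eq h3n] at this; exact this, Or.inr ?_⟩
  have hb2 : Function.update b1 (flipr ρ1, ⟨3, h3n⟩) (some S) =
      upd b1 (flipr ρ1) 3 h3n S := rfl
  rw [hb2]
  set b2 : Bd n := upd b1 (flipr ρ1) 3 h3n S with hb2'
  -- facts about b2
  have hrowb2 : ∀ p, p ≠ 3 → get b2 (flipr ρ1) p = none := by
    intro p hp
    rw [hb2', get_upd_ne h3n (Or.inr hp), hb1',
      get_upd_ne hj1 (Or.inl hne10), hb0, get_init]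
  have hS2 : get b2 (flipr ρ1) 3 = some S := by rw [hb2']; exact get_upd_self h3n
  rw [show 2 * n - 2 = (2 * n - 3) + 1 by omega]
  rintro ⟨⟨ρ3, ⟨j3, hj3⟩⟩, x3, hcell3, hcase3⟩
  have hcell3g : get b2 ρ3 j3 = none := by rw [get_eq hj3]; exact hcell3
  have hb3 : Function.update b2 (ρ3, ⟨j3, hj3⟩) (some x3) = upd b2 ρ3 j3 hj3 x3 := rfl
  rw [hb3] at hcase3
  set b3 : Bd n := upd b2 ρ3 j3 hj3 x3 with hb3'
  have hget3 : ∀ r p v, get b3 r p = some v →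
      (r = flipr ρ1 ∧ p = 3) ∨ (r = ρ1 ∧ p = j1) ∨ (r = ρ3 ∧ p = j3) := by
    intro r p v hv
    by_cases e3 : r = ρ3 ∧ p = j3
    · exact Or.inr (Or.inr e3)
    rw [hb3', get_upd_ne hj3 (nand e3)] at hv
    by_cases e2 : r = flipr ρ1 ∧ p = 3
    · exact Or.inl e2
    rw [hb2', get_upd_ne h3n (nand e2)] at hv
    by_cases e1 : r = ρ1 ∧ p = j1
    · exact Or.inr (Or.inl e1)
    rw [hb1', get_upd_ne hj1 (nand e1), hb0, get_init] at hv
    cases hv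
  rcases hcase3 with hwin3 | hnf3
  · exact nwin_three (hne10 : flipr ρ1 ≠ ρ1) hget3 hwin3
  apply hnf3
  -- counting
  have hc1 : cntE b1 = 2 * n - 1 := by
    have h0 : cntE b0 = 2 * n := cnt_init
    have := cnt_upd (b := b0) (x := x1) hj1 hcell1g
    rw [← hb1'] at this; omega
  have hc2 : cntE b2 = 2 * n - 2 := by
    have := cnt_upd (b := b1) (x := S) h3n hcell2g
    rw [← hb2'] at this; omega
  have hc3 : cntE b3 = 2 * n - 3 := by
    have := cnt_upd (b := b2) (x := x3) hj3 hcell3g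
    rw [← hb3'] at this; omega
  by_cases hth3 : Threat b3
  · -- immediate win
    obtain ⟨r', j', hj', y, hc', hw'⟩ := hth3
    rw [show 2 * n - 3 = (2 * n - 4) + 1 by omega]
    refine ⟨(r', ⟨j', hj'⟩), y, by
      have := hc'; rw [get_eq hj'] at this; exact this, Or.inl hw'⟩
  · have hnw3 : ¬ WinB b3 := nwin_three hne10 hget3
    have hS3 : get b3 (flipr ρ1) 3 = some S := pass_some hj3 hcell3g hS2
    have hb3none : ∀ p, p ≠ 3 → ¬(ρ3 = flipr ρ1 ∧ p = j3) → get b3 (flipr ρ1) p = none := by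
      intro p hp hpe
      have hne : flipr ρ1 ≠ ρ3 ∨ p ≠ j3 := by
        by_cases hr : ρ3 = flipr ρ1
        · exact Or.inr (fun e => hpe ⟨hr, e⟩)
        · exact Or.inl (fun e => hr e.symm)
      rw [hb3', get_upd_ne hj3 hne]
      exact hrowb2 p hp
    by_cases hcond : ρ3 = flipr ρ1 ∧ j3 < 3
    · -- play S at (flipr ρ1, 6) : trap at 3..6
      have h6n : (6 : ℕ) < n := by omega
      have hn6 : get b3 (flipr ρ1) 6 = none :=
        hb3none 6 (by omega) (fun e => by omega)
      have hn4 : get b3 (flipr ρ1) 4 = none :=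
        hb3none 4 (by omega) (fun e => by omega)
      have hn5 : get b3 (flipr ρ1) 5 = none :=
        hb3none 5 (by omega) (fun e => by omega)
      have hn7 : get b3 (flipr ρ1) 7 = none := by
        by_cases h7n : 7 < n
        · exact hb3none 7 (by omega) (fun e => by omega)
        · unfold get; rw [dif_neg h7n]
      have hn8 : get b3 (flipr ρ1) 8 = none := by
        by_cases h8n : 8 < n
        · exact hb3none 8 (by omega) (fun e => by omega)
        · unfold get; rw [dif_neg h8n]
      rw [show 2 * n - 3 = (2 * n - 4) + 1 by omega]
      refine ⟨(flipr ρ1, ⟨6, h6n⟩), S, by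
        have := hn6; rw [get_eq h6n] at this; exact this, Or.inr ?_⟩
      have hb4 : Function.update b3 (flipr ρ1, ⟨6, h6n⟩) (some S) =
          upd b3 (flipr ρ1) 6 h6n S := rfl
      rw [hb4]
      have htrap4 : Trap (upd b3 (flipr ρ1) 6 h6n S) := by
        refine ⟨flipr ρ1, 3, pass_some h6n hn6 hS3, ?_, ?_, get_upd_self h6n⟩
        · exact ⟨by omega, pass_none h6n (Or.inr (by omega)) hn4⟩
        · exact ⟨by omega, pass_none h6n (Or.inr (by omega)) hn5⟩
      have hth4 : ¬ Threat (upd b3 (flipr ρ1) 6 h6n S) := by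
        intro hcon
        obtain ⟨a, hca⟩ := threat_localize h6n hn6 hth3 hcon
        rcases hca with ⟨ha, -, hcc⟩ | ⟨-, hxo, -⟩ | ⟨ha, -, hcc⟩
        · rcases hcc with ⟨he, hs⟩ | ⟨hs, he⟩
          · rw [show a+2 = 8 by omega, hn8] at hs; cases hs
          · rw [show a+1 = 7 by omega, hn7] at hs; cases hs
        · cases hxo
        · rcases hcc with ⟨he, hs⟩ | ⟨hs, he⟩
          · rw [show a+1 = 5 by omega, hn5] at hs; cases hs
          · rw [show a = 4 by omega, hn4] at hs; cases hs
      have hnw4 : ¬ WinB (upd b3 (flipr ρ1) 6 h6n S) := not_win_upd h6n hn6 hth3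
      have hc4 : cntE (upd b3 (flipr ρ1) 6 h6n S) = 2 * n - 4 := by
        have := cnt_upd (b := b3) (x := S) h6n hn6; omega
      have heven : Even (2 * n - 4) := ⟨n - 2, by omega⟩
      have := (AB (2 * n - 4) _ hc4 hnw4).2 heven hth4 htrap4
      simpa using this
    · -- play S at (flipr ρ1, 0) : trap at 0..3
      have h0n : (0 : ℕ) < n := by omega
      have hout : ∀ p, p < 3 → ¬(ρ3 = flipr ρ1 ∧ p = j3) := by
        intro p hp ⟨e1, e2⟩
        exact hcond ⟨e1, by omega⟩
      have hn0 : get b3 (flipr ρ1) 0 = none := hb3none 0 (by omega) (hout 0 (by omega))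
      have hn1 : get b3 (flipr ρ1) 1 = none := hb3none 1 (by omega) (hout 1 (by omega))
      have hn2 : get b3 (flipr ρ1) 2 = none := hb3none 2 (by omega) (hout 2 (by omega))
      rw [show 2 * n - 3 = (2 * n - 4) + 1 by omega]
      refine ⟨(flipr ρ1, ⟨0, h0n⟩), S, by
        have := hn0; rw [get_eq h0n] at this; exact this, Or.inr ?_⟩
      have hb4 : Function.update b3 (flipr ρ1, ⟨0, h0n⟩) (some S) =
          upd b3 (flipr ρ1) 0 h0n S := rfl
      rw [hb4]
      have htrap4 : Trap (upd b3 (flipr ρ1) 0 h0n S) := by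
        refine ⟨flipr ρ1, 0, get_upd_self h0n, ?_, ?_, pass_some h0n hn0 hS3⟩
        · exact ⟨by omega, pass_none h0n (Or.inr (by omega)) hn1⟩
        · exact ⟨by omega, pass_none h0n (Or.inr (by omega)) hn2⟩
      have hth4 : ¬ Threat (upd b3 (flipr ρ1) 0 h0n S) := by
        intro hcon
        obtain ⟨a, hca⟩ := threat_localize h0n hn0 hth3 hcon
        rcases hca with ⟨ha, -, hcc⟩ | ⟨-, hxo, -⟩ | ⟨ha, -, -⟩
        · rcases hcc with ⟨he, hs⟩ | ⟨hs, he⟩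
          · rw [show a+2 = 2 by omega, hn2] at hs; cases hs
          · rw [show a+1 = 1 by omega, hn1] at hs; cases hs
        · cases hxo
        · omega
      have hnw4 : ¬ WinB (upd b3 (flipr ρ1) 0 h0n S) := not_win_upd h0n hn0 hth3
      have hc4 : cntE (upd b3 (flipr ρ1) 0 h0n S) = 2 * n - 4 := by
        have := cnt_upd (b := b3) (x := S) h0n hn0; omega
      have heven : Even (2 * n - 4) := ⟨n - 2, by omega⟩
      have := (AB (2 * n - 4) _ hc4 hnw4).2 heven hth4 htrap4
      simpa using this

end SOSAux

open SOSAux in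
/-- The normal SOS game on the 2×n board (targets count only horizontally
within a row) is a draw for `n < 7` (neither player can force a win), and for
`n ≥ 7` the second player can force a win (the first player cannot even force
a draw). -/
theorem two_by_n_sos_solution (n : ℕ) :
    (n < 7 →
      Force (Achieves2 [S, O, S]) (2 * n) false (fun _ : Fin 2 × Fin n => none) ∧
        ¬ Force (Achieves2 [S, O, S]) (2 * n) true (fun _ : Fin 2 × Fin n => none)) ∧
    (7 ≤ n →
      ¬ Force (Achieves2 [S, O, S]) (2 * n) false (fun _ : Fin 2 × Fin n => none)) := by
  obtain ⟨hnw0, hth0, htr0, hpre0⟩ := init_clean (n := n)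
  constructor
  · intro h7
    constructor
    · exact (force_congr winB_iff _ _ _).mpr
        (lemF h7 (2 * n) _ cnt_init hnw0 hth0 htr0 hpre0)
    · intro h
      exact lemE h7 (2 * n) _ cnt_init hnw0 hth0 htr0 hpre0
        ((force_congr winB_iff _ _ _).mp h)
  · intro h7 h
    exact second_wins h7 ((force_congr winB_iff _ _ _).mp h)
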